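/- Let H ∈ ℝ^{n_y×n_x} have full row rank (rank H = n_y), so that HHᵀ is invertible, and set H† = Hᵀ(HHᵀ)⁻¹. Let κ > 0, let x ∈ ℝ^{n_x} satisfy ‖x‖_∞ ≤ κ, let γ ∈ ℝ^{n_y} belong to the zonotope ⟨c_γ, G_γ⟩ with c_γ ∈ ℝ^{n_y} and G_γ ∈ ℝ^{n_y×ξ_γ}, and let z = H x + γ. Then x belongs to the zonotope ⟨c_{x|z}, G_{x|z}⟩ with center c_{x|z} = H†(z − c_γ) and generator matrix G_{x|z} = [ H† G_γ , κ(I_{n_x} − H† H) ] (horizontal concatenation). -/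

import Mathlib

open Matrix

/-- If `H` has full row rank and `x` satisfies `‖x‖_∞ ≤ κ`,
`γ` lies in the zonotope `⟨cγ, Gγ⟩` and `z = H x + γ`, then `x` lies in the
zonotope with center `H†(z − cγ)` and generators `[H† Gγ, κ(I − H† H)]`,
where `H† = Hᵀ(HHᵀ)⁻¹`. -/
theorem stmt_0 {nx ny ξγ : ℕ}
    (H : Matrix (Fin ny) (Fin nx) ℝ) (hrank : H.rank = ny)
    (κ : ℝ) (hκ : 0 < κ)
    (x : Fin nx → ℝ) (hx : ∀ j, |x j| ≤ κ)
    (cγ : Fin ny → ℝ) (Gγ : Matrix (Fin ny) (Fin ξγ) ℝ)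
    (γ : Fin ny → ℝ)
    (hγ : ∃ βγ : Fin ξγ → ℝ, (∀ i, |βγ i| ≤ 1) ∧ γ = cγ + Gγ.mulVec βγ)
    (z : Fin ny → ℝ) (hz : z = H.mulVec x + γ) :
    ∃ β : Fin ξγ ⊕ Fin nx → ℝ, (∀ i, |β i| ≤ 1) ∧
      x = (Hᵀ * (H * Hᵀ)⁻¹).mulVec (z - cγ) +
        (Matrix.fromCols ((Hᵀ * (H * Hᵀ)⁻¹) * Gγ)
          (κ • ((1 : Matrix (Fin nx) (Fin nx) ℝ) - (Hᵀ * (H * Hᵀ)⁻¹) * H))).mulVec β := by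
  obtain ⟨βγ, hβγ, hγeq⟩ := hγ
  set A := Hᵀ * (H * Hᵀ)⁻¹ with hA
  refine ⟨Sum.elim (fun i => -βγ i) (fun j => x j / κ), ?_, ?_⟩
  · rintro (i | j)
    · simpa using hβγ i
    · simp only [Sum.elim_inr, abs_div, abs_of_pos hκ]
      rw [div_le_one hκ]
      exact hx j
  · subst hz hγeq
    rw [Matrix.fromCols_mulVec_sumElim]
    have h1 : (A * Gγ).mulVec (fun i => -βγ i) = -((A * Gγ).mulVec βγ) := by
      rw [show (fun i => -βγ i) = -βγ from rfl, Matrix.mulVec_neg]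
    have h2 : (κ • ((1 : Matrix (Fin nx) (Fin nx) ℝ) - A * H)).mulVec (fun j => x j / κ)
        = x - (A * H).mulVec x := by
      have : (fun j => x j / κ) = κ⁻¹ • x := by
        ext j; simp [div_eq_inv_mul, mul_comm]
      rw [this, Matrix.smul_mulVec, Matrix.mulVec_smul,
        smul_smul, mul_inv_cancel₀ hκ.ne', one_smul, Matrix.sub_mulVec,
        Matrix.one_mulVec]
    have h3 : H.mulVec x + (cγ + Gγ.mulVec βγ) - cγ = H.mulVec x + Gγ.mulVec βγ := by
      abel
    rw [h1, h2, h3, Matrix.mulVec_add]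
    simp only [Matrix.mulVec_mulVec]
    abel
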